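/- Let G : E' → E be a right adjoint functor with two image-factorisations (Φ₁, M₁, U₁) and (Φ₂, M₂, U₂). If d* : M₁ ⇄ M₂ : d_* is an adjunction which is well-adapted, meaning Φ₁ ≅ Φ₂ ∘ d* and U₁ ∘ d_* ≅ U₂, then (d*, d_*) is an adjoint equivalence of categories. -/
import Mathlib

open CategoryTheory

/-- Any well-adapted adjunction between two image-factorisations `(Φ₁, M₁, U₁)` and
`(Φ₂, M₂, U₂)` of the same right adjoint functor `G : E' ⥤ E` is an adjoint equivalence:
both `d*` and `d_*` are equivalences of categories. -/
theorem stmt_1 {E' E M₁ M₂ : Type*} [Category E'] [Category E] [Category M₁] [Category M₂]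
    (G : E' ⥤ E) [G.IsRightAdjoint]
    (Φ₁ : M₁ ⥤ E') (Ψ₁ : E' ⥤ M₁) (adj₁ : Φ₁ ⊣ Ψ₁) [Φ₁.Full] [Φ₁.Faithful]
    (Φ₂ : M₂ ⥤ E') (Ψ₂ : E' ⥤ M₂) (adj₂ : Φ₂ ⊣ Ψ₂) [Φ₂.Full] [Φ₂.Faithful]
    (U₁ : M₁ ⥤ E) [U₁.IsRightAdjoint] [U₁.ReflectsIsomorphisms]
    (U₂ : M₂ ⥤ E) [U₂.IsRightAdjoint] [U₂.ReflectsIsomorphisms]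
    (hU₁ : Ψ₁ ⋙ U₁ ≅ G) (hU₂ : Ψ₂ ⋙ U₂ ≅ G)
    (dStar : M₁ ⥤ M₂) (dLower : M₂ ⥤ M₁) (dadj : dStar ⊣ dLower)
    (h1 : Φ₁ ≅ dStar ⋙ Φ₂) (h2 : dLower ⋙ U₁ ≅ U₂) :
    dStar.IsEquivalence ∧ dLower.IsEquivalence := by
  -- `dStar` is fully faithful since `Φ₁ ≅ dStar ⋙ Φ₂` is fully faithful and `Φ₂` is faithful.
  have hcf : (dStar ⋙ Φ₂).Full := Functor.Full.of_iso h1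
  have hcff : (dStar ⋙ Φ₂).Faithful := Functor.Faithful.of_iso h1
  have hdF : dStar.Faithful := Functor.Faithful.of_comp dStar Φ₂
  have hdFu : dStar.Full := Functor.Full.of_comp_faithful dStar Φ₂
  -- hence the unit of `dadj` is an isomorphism
  have hunit : ∀ X, IsIso (dadj.unit.app X) := fun X => inferInstance
  -- the counit is an isomorphism: use that `U₂` reflects isomorphisms
  have hcounit : ∀ Y, IsIso (dadj.counit.app Y) := by
    intro Y
    have h3 : dadj.unit.app (dLower.obj Y) ≫ dLower.map (dadj.counit.app Y) = 𝟙 _ :=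
      dadj.right_triangle_components Y
    have h4 : IsIso (dLower.map (dadj.counit.app Y)) := by
      have h3' : IsIso (dadj.unit.app (dLower.obj Y) ≫ dLower.map (dadj.counit.app Y)) := by
        rw [h3]; infer_instance
      exact IsIso.of_isIso_comp_left (dadj.unit.app (dLower.obj Y)) _
    have h5 : IsIso (U₁.map (dLower.map (dadj.counit.app Y))) := inferInstance
    have h6 : IsIso ((dLower ⋙ U₁).map (dadj.counit.app Y)) := h5
    -- transfer along `h2`
    have h7 := h2.hom.naturality (dadj.counit.app Y)
    simp only [Functor.id_obj] at h7
    have h9 : U₂.map (dadj.counit.app Y) =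
        h2.inv.app _ ≫ (dLower ⋙ U₁).map (dadj.counit.app Y) ≫ h2.hom.app Y := by
      rw [h7]; simp
    have h8 : IsIso (U₂.map (dadj.counit.app Y)) := by rw [h9]; infer_instance
    exact isIso_of_reflects_iso _ U₂
  haveI := hunit
  haveI := hcounit
  exact ⟨dadj.toEquivalence.isEquivalence_functor, dadj.toEquivalence.isEquivalence_inverse⟩
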